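/- Let k ≥ 1, 1 ≤ w ≤ k, and N ≥ 0. For t = 0,…,N−1 define the window W_t = {(t·w + r) mod k : 0 ≤ r < w} ⊆ ℤ/kℤ, and for i ∈ ℤ/kℤ let f(i) = |{t ∈ {0,…,N−1} : i ∈ W_t}|. Then f(i) ∈ {⌊N·w/k⌋, ⌈N·w/k⌉} for every i, and consequently |f(i) − f(j)| ≤ 1 for all i, j ∈ ℤ/kℤ. -/

import Mathlib

/-- Counting elements of `range M` congruent to `a` mod `k`. -/
lemma count_congruent (k M a : ℕ) (hk : 0 < k) (ha : a < k) :
    ((Finset.range M).filter (fun n => n % k = a)).card = (M + (k - 1 - a)) / k := by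
  rw [← Finset.card_range ((M + (k - 1 - a)) / k)]
  apply Finset.card_nbij' (fun n => (n - a) / k) (fun q => a + q * k)
  · intro n hn
    simp only [Finset.mem_coe, Finset.mem_filter, Finset.mem_range] at hn ⊢
    obtain ⟨hnM, hna⟩ := hn
    have haln : a ≤ n := hna ▸ Nat.mod_le n k
    have hdvd : k ∣ n - a := by
      have h : n % k = a % k := by rw [hna, Nat.mod_eq_of_lt ha]
      exact (Nat.modEq_iff_dvd' haln).mp (Nat.ModEq.symm h)
    have h1 : ((n - a) / k + 1) * k ≤ M + (k - 1 - a) := by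
      rw [add_mul, one_mul, Nat.div_mul_cancel hdvd]
      omega
    have h2 := (Nat.le_div_iff_mul_le hk).mpr h1
    omega
  · intro q hq
    simp only [Finset.mem_coe, Finset.mem_range] at hq
    simp only [Finset.mem_coe, Finset.mem_filter, Finset.mem_range]
    refine ⟨?_, by rw [Nat.add_mul_mod_self_right, Nat.mod_eq_of_lt ha]⟩
    have h1 : (q + 1) * k ≤ M + (k - 1 - a) :=
      le_trans (Nat.mul_le_mul_right k hq) (Nat.div_mul_le_self _ _)
    have h2 : q * k + k ≤ M + (k - 1 - a) := by rw [← add_one_mul]; exact h1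
    omega
  · intro n hn
    simp only [Finset.mem_coe, Finset.mem_filter, Finset.mem_range] at hn
    obtain ⟨hnM, hna⟩ := hn
    have haln : a ≤ n := hna ▸ Nat.mod_le n k
    have hdvd : k ∣ n - a := by
      have h : n % k = a % k := by rw [hna, Nat.mod_eq_of_lt ha]
      exact (Nat.modEq_iff_dvd' haln).mp (Nat.ModEq.symm h)
    beta_reduce
    rw [Nat.div_mul_cancel hdvd]
    omega
  · intro q _
    simp only [Nat.add_sub_cancel_left]
    exact Nat.mul_div_cancel _ hk

/-- Repeatedly taking windows of `w` cyclically consecutive elements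
of `ℤ/kℤ` (the `t`-th window starting at `t·w mod k`), every element is covered
either `⌊N·w/k⌋` or `⌈N·w/k⌉` times among the first `N` windows; hence any two
coverage counts differ by at most one. -/
theorem stmt10 (k w N : ℕ) (hk : 1 ≤ k) (hw1 : 1 ≤ w) (hwk : w ≤ k)
    (W : ℕ → Finset (ZMod k))
    (hW : ∀ t, W t = (Finset.range w).image (fun r => ((t * w + r : ℕ) : ZMod k)))
    (f : ZMod k → ℕ)
    (hf : ∀ i, f i = ((Finset.range N).filter (fun t => i ∈ W t)).card) :
    (∀ i, f i = ⌊(N * w : ℚ) / (k : ℚ)⌋₊ ∨ f i = ⌈(N * w : ℚ) / (k : ℚ)⌉₊) ∧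
    ∀ i j, |(f i : ℤ) - (f j : ℤ)| ≤ 1 := by
  haveI : NeZero k := ⟨by omega⟩
  have hkpos : 0 < k := hk
  have hwpos : 0 < w := hw1
  -- membership characterization via `val`
  have hmemval : ∀ (n : ℕ) (i : ZMod k), ((n : ZMod k) = i) ↔ n % k = i.val := by
    intro n i
    rw [← (ZMod.val_injective k).eq_iff, ZMod.val_natCast]
  -- key: f i counts elements of range (N*w) congruent to i.val
  have key : ∀ i : ZMod k,
      f i = ((Finset.range (N * w)).filter (fun n => n % k = i.val)).card := by
    intro i
    rw [hf]
    symm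
    apply Finset.card_bij (fun n _ => n / w)
    · intro n hn
      simp only [Finset.mem_filter, Finset.mem_range] at hn ⊢
      obtain ⟨hnM, hni⟩ := hn
      refine ⟨(Nat.div_lt_iff_lt_mul hwpos).mpr hnM, ?_⟩
      rw [hW]
      simp only [Finset.mem_image, Finset.mem_range]
      refine ⟨n % w, Nat.mod_lt _ hwpos, ?_⟩
      rw [Nat.div_add_mod']
      exact (hmemval n i).mpr hni
    · intro n1 h1 n2 h2 heq
      simp only [Finset.mem_filter, Finset.mem_range] at h1 h2
      have hc : (n1 : ZMod k) = (n2 : ZMod k) := by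
        rw [ZMod.natCast_eq_natCast_iff']
        omega
      have hr : ((n1 % w : ℕ) : ZMod k) = ((n2 % w : ℕ) : ZMod k) := by
        have h : ((n1 / w * w + n1 % w : ℕ) : ZMod k) = ((n2 / w * w + n2 % w : ℕ) : ZMod k) := by
          rw [Nat.div_add_mod', Nat.div_add_mod']; exact hc
        rw [heq] at h
        push_cast at h
        exact add_left_cancel h
      have hrval : n1 % w = n2 % w := by
        have l1 : n1 % w < k := lt_of_lt_of_le (Nat.mod_lt _ hwpos) hwk
        have l2 : n2 % w < k := lt_of_lt_of_le (Nat.mod_lt _ hwpos) hwk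
        rw [← ZMod.val_cast_of_lt l1, ← ZMod.val_cast_of_lt l2, hr]
      rw [← Nat.div_add_mod' n1 w, ← Nat.div_add_mod' n2 w, heq, hrval]
    · intro t ht
      simp only [Finset.mem_filter, Finset.mem_range] at ht
      obtain ⟨htN, hti⟩ := ht
      rw [hW] at hti
      simp only [Finset.mem_image, Finset.mem_range] at hti
      obtain ⟨r, hr, hre⟩ := hti
      refine ⟨t * w + r, ?_, ?_⟩
      · simp only [Finset.mem_filter, Finset.mem_range]
        constructor
        · calc t * w + r < t * w + w := by omega
            _ = (t + 1) * w := by ring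
            _ ≤ N * w := Nat.mul_le_mul_right w (by omega)
        · exact (hmemval _ i).mp hre
      · rw [Nat.mul_comm t w, Nat.mul_add_div hwpos, Nat.div_eq_of_lt hr]
        omega
  have hvl : ∀ i : ZMod k, i.val < k := fun i => ZMod.val_lt i
  -- floor value
  have hfl : ⌊(N * w : ℚ) / (k : ℚ)⌋₊ = N * w / k := by
    rw [show ((N : ℚ) * w) = ((N * w : ℕ) : ℚ) by push_cast; ring]
    exact Nat.floor_div_eq_div (N * w) k
  set m := N * w with hm
  -- ceiling value
  have hce : ⌈(N * w : ℚ) / (k : ℚ)⌉₊ = if k ∣ m then m / k else m / k + 1 := by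
    rw [show ((N : ℚ) * w) = ((m : ℕ) : ℚ) from (Nat.cast_mul N w).symm]
    by_cases hd : k ∣ m
    · rw [if_pos hd, ← Nat.cast_div hd (Nat.cast_ne_zero.mpr (by omega))]
      exact Nat.ceil_natCast _
    · rw [if_neg hd]
      refine le_antisymm ?_ ?_
      · have := Nat.ceil_le_floor_add_one ((m : ℚ) / (k : ℚ))
        rwa [Nat.floor_div_eq_div] at this
      · rw [Nat.add_one_le_iff, Nat.lt_ceil]
        rw [lt_div_iff₀ (by exact_mod_cast hkpos)]
        have h1 : m / k * k ≤ m := Nat.div_mul_le_self m k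
        have h2 : m / k * k ≠ m := fun h => hd (h ▸ dvd_mul_left k (m / k))
        exact_mod_cast lt_of_le_of_ne h1 h2
  have main : ∀ i, f i = ⌊(N * w : ℚ) / (k : ℚ)⌋₊ ∨ f i = ⌈(N * w : ℚ) / (k : ℚ)⌉₊ := by
    intro i
    have hcount := count_congruent k m i.val hkpos (hvl i)
    have hfi : f i = (m + (k - 1 - i.val)) / k := by rw [key i, hcount]
    rw [hfl, hce, hfi]
    by_cases hd : k ∣ m
    · left
      obtain ⟨q, hq⟩ := hd
      rw [hq, Nat.mul_add_div hkpos, Nat.mul_div_cancel_left _ hkpos,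
        Nat.div_eq_of_lt (by omega)]
      omega
    · rw [if_neg hd]
      have hlow : m / k ≤ (m + (k - 1 - i.val)) / k := Nat.div_le_div_right (by omega)
      have hhigh : (m + (k - 1 - i.val)) / k ≤ m / k + 1 := by
        calc (m + (k - 1 - i.val)) / k ≤ (m + k) / k := Nat.div_le_div_right (by omega)
          _ = m / k + 1 := Nat.add_div_right m hkpos
      omega
  refine ⟨main, ?_⟩
  intro i j
  have hle : ⌈(N * w : ℚ) / (k : ℚ)⌉₊ ≤ ⌊(N * w : ℚ) / (k : ℚ)⌋₊ + 1 :=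
    Nat.ceil_le_floor_add_one _
  have hge : ⌊(N * w : ℚ) / (k : ℚ)⌋₊ ≤ ⌈(N * w : ℚ) / (k : ℚ)⌉₊ :=
    Nat.floor_le_ceil _
  rcases main i with hi | hi <;> rcases main j with hj | hj <;>
    rw [hi, hj] <;> rw [abs_le] <;> constructor <;> push_cast <;> omega
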